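/- Let r ≥ 1 and let F₁, …, F_r : ℂ → ℂˣ satisfy F_j(s) = F_{j−1}(s)·F_j(s+1) for all s ∈ ℂ and 2 ≤ j ≤ r, and F₁(s+1) = −F₁(s) for all s ∈ ℂ. Let f ∈ ℤ[x,x⁻¹] be a Laurent polynomial with f(1) = f'(1) = ⋯ = f^{(r−1)}(1) = 0 (formal derivatives evaluated at x = 1). Then the function T_f F_r is constant with value 1 or −1. -/

import Mathlib

open LaurentPolynomial
open scoped LaurentPolynomial

/-- The coefficient of `x^k` in a Laurent polynomial `f = ∑ₖ a(k) xᵏ ∈ ℤ[x,x⁻¹]`. -/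
noncomputable def coeffZ (f : ℤ[T;T⁻¹]) (k : ℤ) : ℤ := f.coeff k

/-- The twisted function `(T_f F)(s) = ∏ₖ F(s−k)^{a(k)}` where `a` is the coefficient function
of the Laurent polynomial `f`. -/
noncomputable def Tw (f : ℤ[T;T⁻¹]) (F : ℂ → ℂˣ) (s : ℂ) : ℂˣ :=
  ∏ᶠ k : ℤ, F (s - (k : ℂ)) ^ coeffZ f k

/-- The formal derivative of a Laurent polynomial:
`(∑ₖ a(k) xᵏ)' = ∑ₖ k·a(k) x^{k−1}`. -/
noncomputable def lderiv (f : ℤ[T;T⁻¹]) : ℤ[T;T⁻¹] :=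
  Finsupp.sum (f.coeff : ℤ →₀ ℤ) fun k c => LaurentPolynomial.C (k * c) * T (k - 1)

/-- The value `f(1) = ∑ₖ a(k)` of a Laurent polynomial `f = ∑ₖ a(k) xᵏ` at `x = 1`,
i.e. the sum of its coefficients. -/
noncomputable def evalOne (f : ℤ[T;T⁻¹]) : ℤ := ∑ᶠ k : ℤ, coeffZ f k

noncomputable def eps : ℤ[T;T⁻¹] →+* ℤ :=
  AddMonoidAlgebra.liftNCRingHom (RingHom.id ℤ) 1 (fun _ _ => Commute.all _ _)

lemma eps_single (n : ℤ) (c : ℤ) : eps (AddMonoidAlgebra.single n c) = c := by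
  show AddMonoidAlgebra.liftNC ((RingHom.id ℤ) : ℤ →+ ℤ) _ (AddMonoidAlgebra.single n c) = c
  erw [AddMonoidAlgebra.liftNC_single]
  simp

lemma eps_T (n : ℤ) : eps (T n) = 1 := eps_single n 1

lemma evalOne_eq (f : ℤ[T;T⁻¹]) : evalOne f = eps f := by
  have h1 : evalOne f = ∑ k ∈ f.coeff.support, coeffZ f k := by
    apply finsum_eq_sum_of_support_subset
    intro k hk
    simp only [Function.mem_support, coeffZ] at hk
    simpa using hk
  rw [h1]
  conv_rhs => rw [← AddMonoidAlgebra.sum_coeff_single f]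
  rw [map_finsuppSum]
  simp only [Finsupp.sum, eps_single, coeffZ]

lemma lderiv_eq (f : ℤ[T;T⁻¹]) :
    lderiv f = Finsupp.sum f.coeff fun k c => AddMonoidAlgebra.single (k - 1) (k * c) := by
  unfold lderiv
  refine Finsupp.sum_congr fun k _ => ?_
  rw [single_eq_C_mul_T]

lemma lderiv_add (f g : ℤ[T;T⁻¹]) : lderiv (f + g) = lderiv f + lderiv g := by
  rw [lderiv_eq, lderiv_eq, lderiv_eq, AddMonoidAlgebra.coeff_add]
  exact Finsupp.sum_add_index (fun k _ => by simp) (fun k _ b₁ b₂ => by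
    rw [mul_add, AddMonoidAlgebra.single_add])

noncomputable def D : ℤ[T;T⁻¹] →+ ℤ[T;T⁻¹] := AddMonoidHom.mk' lderiv lderiv_add

lemma D_apply (f : ℤ[T;T⁻¹]) : D f = lderiv f := rfl

lemma lderiv_single (n : ℤ) (c : ℤ) :
    lderiv (AddMonoidAlgebra.single n c : ℤ[T;T⁻¹]) = AddMonoidAlgebra.single (n - 1) (n * c) := by
  rw [lderiv_eq, AddMonoidAlgebra.coeff_single]
  exact Finsupp.sum_single_index (by simp)

lemma lderiv_C_mul_T (n : ℤ) (c : ℤ) :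
    lderiv (LaurentPolynomial.C c * T n) = LaurentPolynomial.C (n * c) * T (n - 1) := by
  rw [← single_eq_C_mul_T, ← single_eq_C_mul_T, lderiv_single]

lemma C_mul_T_mul_C_mul_T (a b m n : ℤ) :
    (LaurentPolynomial.C a * T m) * (LaurentPolynomial.C b * T n)
      = LaurentPolynomial.C (a * b) * T (m + n) := by
  rw [← single_eq_C_mul_T, ← single_eq_C_mul_T, ← single_eq_C_mul_T]
  exact AddMonoidAlgebra.single_mul_single _ _ _ _

lemma lderiv_mul (f g : ℤ[T;T⁻¹]) :
    lderiv (f * g) = lderiv f * g + f * lderiv g := by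
  induction f using LaurentPolynomial.induction_on' with
  | add p q hp hq =>
    rw [add_mul, lderiv_add, hp, hq, lderiv_add, add_mul]
    ring
  | C_mul_T m a =>
    induction g using LaurentPolynomial.induction_on' with
    | add p q hp hq =>
      rw [mul_add, lderiv_add, hp, hq, lderiv_add, mul_add]
      ring
    | C_mul_T n b =>
      rw [C_mul_T_mul_C_mul_T, lderiv_C_mul_T, lderiv_C_mul_T, lderiv_C_mul_T,
        C_mul_T_mul_C_mul_T, C_mul_T_mul_C_mul_T]
      have h1 : m - 1 + n = m + n - 1 := by ring
      have h2 : m + (n - 1) = m + n - 1 := by ring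
      rw [h1, h2, ← add_mul, ← map_add]
      congr 2
      ring

lemma lderiv_T_one_sub : lderiv (T 1 - 1 : ℤ[T;T⁻¹]) = 1 := by
  rw [← D_apply, map_sub, D_apply, D_apply]
  have h1 : (T 1 : ℤ[T;T⁻¹]) = LaurentPolynomial.C 1 * T 1 := by simp
  have h2 : (1 : ℤ[T;T⁻¹]) = LaurentPolynomial.C 1 * T 0 := by simp
  rw [h1, h2, lderiv_C_mul_T, lderiv_C_mul_T]
  simp

lemma lderiv_iter_mul (g : ℤ[T;T⁻¹]) : ∀ j : ℕ,
    lderiv^[j + 1] ((T 1 - 1) * g)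
      = (T 1 - 1) * lderiv^[j + 1] g + (j + 1 : ℤ) • lderiv^[j] g := by
  intro j
  induction j with
  | zero =>
    simp only [zero_add, Function.iterate_one, Function.iterate_zero, id_eq]
    rw [lderiv_mul, lderiv_T_one_sub]
    simp only [zsmul_eq_mul]
    push_cast
    ring
  | succ j ih =>
    rw [Function.iterate_succ_apply', ih, ← D_apply, map_add, map_zsmul,
      D_apply, D_apply, lderiv_mul, lderiv_T_one_sub,
      ← Function.iterate_succ_apply' lderiv (j+1), ← Function.iterate_succ_apply' lderiv j]
    simp only [zsmul_eq_mul]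
    push_cast
    ring

lemma evalOne_mul (f g : ℤ[T;T⁻¹]) : evalOne (f * g) = evalOne f * evalOne g := by
  rw [evalOne_eq, evalOne_eq, evalOne_eq, map_mul]

lemma evalOne_T_one_sub : evalOne (T 1 - 1 : ℤ[T;T⁻¹]) = 0 := by
  rw [evalOne_eq, map_sub, map_one, eps_T, sub_self]

lemma dvd_of_evalOne_eq_zero (f : ℤ[T;T⁻¹]) (h : evalOne f = 0) :
    ∃ g, f = (T 1 - 1) * g := by
  obtain ⟨n, p, hp⟩ := f.exists_T_pow
  have heval : Polynomial.eval 1 p = 0 := by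
    have : (eps.comp Polynomial.toLaurent) p = Polynomial.eval 1 p := by
      have hhom : eps.comp Polynomial.toLaurent = Polynomial.evalRingHom (1 : ℤ) := by
        apply Polynomial.ringHom_ext
        · intro a
          show eps (Polynomial.toLaurent (Polynomial.C a)) = Polynomial.eval 1 (Polynomial.C a)
          rw [Polynomial.toLaurent_C, Polynomial.eval_C]
          exact eps_single 0 a
        · show eps (Polynomial.toLaurent Polynomial.X) = Polynomial.eval 1 Polynomial.X
          rw [Polynomial.toLaurent_X, Polynomial.eval_X]
          exact eps_T 1
      rw [hhom]
      simp
    rw [← this, RingHom.comp_apply, hp, map_mul, eps_T, mul_one, ← evalOne_eq f, h]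
  obtain ⟨q, hq⟩ := (Polynomial.dvd_iff_isRoot.mpr heval : (Polynomial.X - Polynomial.C 1) ∣ p)
  refine ⟨Polynomial.toLaurent q * T (-n), ?_⟩
  have hf : f = Polynomial.toLaurent p * T (-n) := by
    rw [hp, mul_T_assoc]
    simp
  rw [hf, hq, map_mul, map_sub, Polynomial.toLaurent_X, Polynomial.toLaurent_C, map_one]
  ring

lemma evalOne_add (f g : ℤ[T;T⁻¹]) : evalOne (f + g) = evalOne f + evalOne g := by
  rw [evalOne_eq, evalOne_eq, evalOne_eq, map_add]

lemma evalOne_zsmul (c : ℤ) (f : ℤ[T;T⁻¹]) : evalOne (c • f) = c * evalOne f := by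
  rw [evalOne_eq, evalOne_eq]
  have : eps (c • f) = c • eps f := map_zsmul eps.toAddMonoidHom c f
  rw [this, smul_eq_mul]

lemma pow_dvd : ∀ (r : ℕ) (f : ℤ[T;T⁻¹]),
    (∀ j < r, evalOne (lderiv^[j] f) = 0) → ∃ g, f = (T 1 - 1) ^ r * g := by
  intro r
  induction r with
  | zero => exact fun f _ => ⟨f, by simp⟩
  | succ r ih =>
    intro f h
    obtain ⟨g, hg⟩ := dvd_of_evalOne_eq_zero f (by simpa using h 0 (Nat.succ_pos r))
    have hg' : ∀ j < r, evalOne (lderiv^[j] g) = 0 := by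
      intro j hj
      have h1 := h (j + 1) (by omega)
      rw [hg, lderiv_iter_mul g j, evalOne_add, evalOne_mul, evalOne_T_one_sub,
        zero_mul, zero_add, evalOne_zsmul] at h1
      have : ((j : ℤ) + 1) ≠ 0 := by positivity
      exact (mul_eq_zero.mp h1).resolve_left this
    obtain ⟨g', hg'⟩ := ih g hg'
    exact ⟨g', by rw [hg, hg', pow_succ]; ring⟩

lemma evalOne_eq_sum (f : ℤ[T;T⁻¹]) :
    evalOne f = ∑ k ∈ f.coeff.support, coeffZ f k := by
  apply finsum_eq_sum_of_support_subset
  intro k hk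
  simp only [Function.mem_support, coeffZ] at hk
  simpa using hk

lemma Tw_fin (f : ℤ[T;T⁻¹]) (F : ℂ → ℂˣ) (s : ℂ) :
    (Function.mulSupport fun k : ℤ => F (s - (k : ℂ)) ^ coeffZ f k).Finite := by
  apply Set.Finite.subset f.coeff.finite_support
  intro k hk
  simp only [Function.mem_mulSupport] at hk
  simp only [Function.mem_support]
  intro h0
  apply hk
  show F (s - (k : ℂ)) ^ coeffZ f k = 1
  have : coeffZ f k = 0 := h0
  rw [this, zpow_zero]

lemma Tw_add (f g : ℤ[T;T⁻¹]) (F : ℂ → ℂˣ) (s : ℂ) :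
    Tw (f + g) F s = Tw f F s * Tw g F s := by
  unfold Tw
  rw [← finprod_mul_distrib (Tw_fin f F s) (Tw_fin g F s)]
  apply finprod_congr
  intro k
  have : coeffZ (f + g) k = coeffZ f k + coeffZ g k := Finsupp.add_apply f.coeff g.coeff k
  rw [this, zpow_add]

lemma Tw_neg (f : ℤ[T;T⁻¹]) (F : ℂ → ℂˣ) (s : ℂ) :
    Tw (-f) F s = (Tw f F s)⁻¹ := by
  unfold Tw
  rw [← finprod_inv_distrib]
  apply finprod_congr
  intro k
  have : coeffZ (-f) k = -coeffZ f k := Finsupp.neg_apply f.coeff k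
  rw [this, zpow_neg]

lemma Tw_sub (f g : ℤ[T;T⁻¹]) (F : ℂ → ℂˣ) (s : ℂ) :
    Tw (f - g) F s = Tw f F s * (Tw g F s)⁻¹ := by
  rw [sub_eq_add_neg, Tw_add, Tw_neg]

lemma coeffZ_mul_T (f : ℤ[T;T⁻¹]) (k : ℤ) : coeffZ (f * T 1) k = coeffZ f (k - 1) := by
  show (f * AddMonoidAlgebra.single (1 : ℤ) (1 : ℤ)).coeff k = f.coeff (k - 1)
  rw [AddMonoidAlgebra.coeff_mul_single_apply, mul_one, ← sub_eq_add_neg]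

lemma Tw_mul_T (f : ℤ[T;T⁻¹]) (F : ℂ → ℂˣ) (s : ℂ) :
    Tw (f * T 1) F s = Tw f F (s - 1) := by
  unfold Tw
  rw [← finprod_comp_equiv (Equiv.addRight (1 : ℤ))]
  apply finprod_congr
  intro m
  have he : (Equiv.addRight (1 : ℤ)) m = m + 1 := rfl
  rw [he, coeffZ_mul_T, add_sub_cancel_right]
  congr 1
  push_cast
  ring

lemma Tw_ratio (f : ℤ[T;T⁻¹]) (G G' : ℂ → ℂˣ) (s : ℂ)
    (h : ∀ k : ℤ, G (s - 1 - (k : ℂ)) * (G (s - (k : ℂ)))⁻¹ = G' (s - 1 - (k : ℂ))) :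
    Tw (f * T 1 - f) G s = Tw f G' (s - 1) := by
  rw [Tw_sub, Tw_mul_T]
  unfold Tw
  rw [← finprod_inv_distrib, ← finprod_mul_distrib (Tw_fin f G (s - 1))
    ((Tw_fin f G s).subset (Function.mulSupport_inv _).subset :
      (Function.mulSupport fun k : ℤ => (G (s - (k : ℂ)) ^ coeffZ f k)⁻¹).Finite)]
  apply finprod_congr
  intro k
  rw [← inv_zpow, ← mul_zpow, h k]

lemma neg_one_unit (g : ℂˣ) : g * (-g)⁻¹ = (-1 : ℂˣ) := by
  rw [mul_inv_eq_iff_eq_mul, neg_one_mul, neg_neg]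

lemma prod_zpow_eq (g : ℂˣ) (S : Finset ℤ) (a : ℤ → ℤ) :
    ∏ k ∈ S, g ^ a k = g ^ (∑ k ∈ S, a k) := by
  induction S using Finset.cons_induction with
  | empty => simp
  | cons k S hk ih => rw [Finset.prod_cons, Finset.sum_cons, ih, zpow_add]

lemma Tw_const (f : ℤ[T;T⁻¹]) (g : ℂˣ) :
    (∏ᶠ k : ℤ, g ^ coeffZ f k) = g ^ evalOne f := by
  rw [evalOne_eq_sum, ← prod_zpow_eq]
  apply finprod_eq_finset_prod_of_mulSupport_subset
  intro k hk
  simp only [Function.mem_mulSupport] at hk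
  simp only [Finset.coe_sort_coe, Finset.mem_coe, Finsupp.mem_support_iff]
  intro h0
  apply hk
  have : coeffZ f k = 0 := h0
  rw [this, zpow_zero]

lemma Tw_base (F1 : ℂ → ℂˣ) (hF1 : ∀ s : ℂ, F1 (s + 1) = -F1 s) (f : ℤ[T;T⁻¹]) (s : ℂ) :
    Tw (f * T 1 - f) F1 s = (-1 : ℂˣ) ^ evalOne f := by
  rw [Tw_sub, Tw_mul_T]
  unfold Tw
  rw [← finprod_inv_distrib, ← finprod_mul_distrib (Tw_fin f F1 (s - 1))
    ((Tw_fin f F1 s).subset (Function.mulSupport_inv _).subset :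
      (Function.mulSupport fun k : ℤ => (F1 (s - (k : ℂ)) ^ coeffZ f k)⁻¹).Finite)]
  rw [← Tw_const f (-1 : ℂˣ)]
  apply finprod_congr
  intro k
  rw [← inv_zpow, ← mul_zpow]
  congr 1
  have h1 : F1 (s - (k : ℂ)) = -F1 (s - 1 - (k : ℂ)) := by
    have := hF1 (s - 1 - (k : ℂ))
    rw [show s - 1 - (k : ℂ) + 1 = s - (k : ℂ) by ring] at this
    exact this
  rw [h1, neg_one_unit]

lemma key (r : ℕ) (F : ℕ → ℂ → ℂˣ)
    (hlad : ∀ j : ℕ, 2 ≤ j → j ≤ r → ∀ s : ℂ, F j s = F (j - 1) s * F j (s + 1))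
    (hF1 : ∀ s : ℂ, F 1 (s + 1) = -F 1 s) :
    ∀ j : ℕ, 1 ≤ j → j ≤ r → ∀ (f : ℤ[T;T⁻¹]) (s : ℂ),
      Tw ((T 1 - 1) ^ j * f) (F j) s = (-1 : ℂˣ) ^ evalOne f := by
  intro j hj
  induction j, hj using Nat.le_induction with
  | base =>
    intro _ f s
    rw [show ((T 1 - 1 : ℤ[T;T⁻¹]) ^ 1 * f) = f * T 1 - f by ring]
    exact Tw_base (F 1) hF1 f s
  | succ j hj ih =>
    intro hjr f s
    have hstep : ∀ k : ℤ,
        F (j + 1) (s - 1 - (k : ℂ)) * (F (j + 1) (s - (k : ℂ)))⁻¹ = F j (s - 1 - (k : ℂ)) := by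
      intro k
      have h1 := hlad (j + 1) (by omega) hjr (s - 1 - (k : ℂ))
      rw [show s - 1 - (k : ℂ) + 1 = s - (k : ℂ) by ring] at h1
      rw [mul_inv_eq_iff_eq_mul, Nat.add_sub_cancel] at *
      exact h1
    have h2 : ((T 1 - 1 : ℤ[T;T⁻¹]) ^ (j + 1) * f)
        = ((T 1 - 1) ^ j * f) * T 1 - (T 1 - 1) ^ j * f := by ring
    rw [h2, Tw_ratio _ _ _ _ hstep, ih (by omega) f (s - 1)]

/-- Let `r ≥ 1` and let `F₁, …, F_r : ℂ → ℂˣ` satisfy `F_j(s) = F_{j−1}(s)·F_j(s+1)` for all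
`s ∈ ℂ` and `2 ≤ j ≤ r`, and `F₁(s+1) = −F₁(s)` for all `s ∈ ℂ`. Let `f ∈ ℤ[x,x⁻¹]` be a
Laurent polynomial with `f(1) = f'(1) = ⋯ = f^{(r−1)}(1) = 0` (formal derivatives evaluated
at `x = 1`). Then the function `T_f F_r` is constant with value `1` or `−1`. -/
theorem stmt8 (r : ℕ) (hr : 1 ≤ r) (F : ℕ → ℂ → ℂˣ)
    (hlad : ∀ j : ℕ, 2 ≤ j → j ≤ r → ∀ s : ℂ, F j s = F (j - 1) s * F j (s + 1))
    (hF1 : ∀ s : ℂ, F 1 (s + 1) = -F 1 s)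
    (f : ℤ[T;T⁻¹]) (hder : ∀ j : ℕ, j < r → evalOne (lderiv^[j] f) = 0) :
    ∃ u : ℂˣ, (u = 1 ∨ u = -1) ∧ ∀ s : ℂ, Tw f (F r) s = u := by
  obtain ⟨g, hg⟩ := pow_dvd r f hder
  refine ⟨(-1 : ℂˣ) ^ evalOne g, ?_, ?_⟩
  · rcases Int.even_or_odd (evalOne g) with ⟨m, hm⟩ | ⟨m, hm⟩
    · left
      rw [hm, zpow_add, ← mul_zpow, neg_mul_neg, one_mul, one_zpow]
    · right
      rw [hm, zpow_add, two_mul, zpow_add, ← mul_zpow, neg_mul_neg, one_mul, one_zpow,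
        zpow_one, one_mul]
  · intro s
    rw [hg]
    exact key r F hlad hF1 r hr le_rfl g s
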